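/- Fix ε ∈ (0,1] and q ∈ (1,∞). For every y ∈ ℝ^p, the dual norm of the εq-norm satisfies ‖y‖_{εq}^* := sup{⟨y,x⟩ : x ∈ ℝ^p, ‖x‖_{εq} ≤ 1} = ε‖y‖_{q/(q−1)} + (1−ε)‖y‖_1; and for q = 1, ‖y‖_{ε1}^* = ε‖y‖_∞ + (1−ε)‖y‖_1. -/

import Mathlib

/-- The ℓ_q norm on `ℝ^p` (for a real exponent `q`). -/
noncomputable def lqNorm (p : ℕ) (q : ℝ) (x : Fin p → ℝ) : ℝ :=
  (∑ i : Fin p, |x i| ^ q) ^ (1 / q)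

/-- The ℓ_1 norm on `ℝ^p`. -/
noncomputable def l1Norm (p : ℕ) (x : Fin p → ℝ) : ℝ :=
  ∑ i : Fin p, |x i|

/-- The supremum (ℓ_∞) norm on `ℝ^p`. -/
noncomputable def linfNorm (p : ℕ) (x : Fin p → ℝ) : ℝ :=
  ⨆ i : Fin p, |x i|

/-- Comparison test: if the defining sum at level `v = 1` is at most `ε ^ r`,
then `N x ≤ 1`. -/
lemma epsq_le_one_test {p : ℕ} {ε r : ℝ} (hε0 : 0 < ε) (hε1 : ε ≤ 1) (hr : 0 < r)
    {N : (Fin p → ℝ) → ℝ}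
    (hNeq : ∀ x : Fin p → ℝ,
      ∑ i : Fin p, (max (|x i| - (1 - ε) * N x) 0) ^ r = (ε * N x) ^ r)
    (x : Fin p → ℝ)
    (h1 : ∑ i : Fin p, (max (|x i| - (1 - ε)) 0) ^ r ≤ ε ^ r) : N x ≤ 1 := by
  by_contra h
  push_neg at h
  have key : ∀ i : Fin p,
      (max (|x i| - (1 - ε) * N x) 0 : ℝ) ^ r ≤ (max (|x i| - (1 - ε)) 0) ^ r := by
    intro i
    apply Real.rpow_le_rpow (le_max_right _ _) _ hr.le
    apply max_le_max _ le_rfl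
    nlinarith
  have h2 : (ε * N x) ^ r ≤ ε ^ r := by
    rw [← hNeq x]
    exact le_trans (Finset.sum_le_sum fun i _ => key i) h1
  have h3 : ε ^ r < (ε * N x) ^ r :=
    Real.rpow_lt_rpow hε0.le (by nlinarith) hr
  linarith

/-- Generic upper bound for the dual problem. -/
lemma epsq_dual_ub {p : ℕ} {ε : ℝ} (hε0 : 0 < ε) (hε1 : ε ≤ 1)
    {Nx : ℝ} (hN0 : 0 ≤ Nx) (hNx : Nx ≤ 1) (x y : Fin p → ℝ) (D : ℝ) (hD : 0 ≤ D)
    (hDu : ∑ i : Fin p, |y i| * max (|x i| - (1 - ε) * Nx) 0 ≤ D * (ε * Nx)) :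
    ∑ i : Fin p, y i * x i ≤ ε * D + (1 - ε) * l1Norm p y := by
  have l1nn : 0 ≤ l1Norm p y := Finset.sum_nonneg fun i _ => abs_nonneg _
  have step1 : ∑ i : Fin p, y i * x i ≤
      ∑ i : Fin p, |y i| * (max (|x i| - (1 - ε) * Nx) 0 + (1 - ε) * Nx) := by
    apply Finset.sum_le_sum
    intro i _
    calc y i * x i ≤ |y i * x i| := le_abs_self _
      _ = |y i| * |x i| := abs_mul _ _
      _ ≤ |y i| * (max (|x i| - (1 - ε) * Nx) 0 + (1 - ε) * Nx) := by
          apply mul_le_mul_of_nonneg_left _ (abs_nonneg _)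
          have := le_max_left (|x i| - (1 - ε) * Nx) 0
          linarith
  have step2 : ∑ i : Fin p, |y i| * (max (|x i| - (1 - ε) * Nx) 0 + (1 - ε) * Nx) =
      (∑ i : Fin p, |y i| * max (|x i| - (1 - ε) * Nx) 0) + (1 - ε) * Nx * l1Norm p y := by
    rw [l1Norm, Finset.mul_sum, ← Finset.sum_add_distrib]
    apply Finset.sum_congr rfl
    intro i _
    ring
  have : ∑ i : Fin p, y i * x i ≤ D * (ε * Nx) + (1 - ε) * Nx * l1Norm p y := by
    rw [step2] at step1
    linarith
  nlinarith [mul_le_mul_of_nonneg_left hNx hD, mul_le_mul_of_nonneg_left hNx l1nn]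

/-- **dual norm of the εq-norm.**  Let `N` be the εq-norm for
`q ∈ (1,∞)` and `N1` the ε1-norm (case `q = 1`).  Then for every `y ∈ ℝ^p`,
`sup {⟨y,x⟩ : N x ≤ 1} = ε ‖y‖_{q/(q-1)} + (1-ε) ‖y‖_1`, and
`sup {⟨y,x⟩ : N1 x ≤ 1} = ε ‖y‖_∞ + (1-ε) ‖y‖_1`. -/
theorem epsq_dual_norm (p : ℕ) (ε q : ℝ)
    (hε0 : 0 < ε) (hε1 : ε ≤ 1) (hq : 1 < q)
    (N : (Fin p → ℝ) → ℝ)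
    (hN0 : ∀ x : Fin p → ℝ, 0 ≤ N x)
    (hNeq : ∀ x : Fin p → ℝ,
      ∑ i : Fin p, (max (|x i| - (1 - ε) * N x) 0) ^ q = (ε * N x) ^ q)
    (N1 : (Fin p → ℝ) → ℝ)
    (hN10 : ∀ x : Fin p → ℝ, 0 ≤ N1 x)
    (hN1eq : ∀ x : Fin p → ℝ,
      ∑ i : Fin p, (max (|x i| - (1 - ε) * N1 x) 0) ^ (1 : ℝ) = (ε * N1 x) ^ (1 : ℝ))
    (y : Fin p → ℝ) :
    sSup ((fun x : Fin p → ℝ => ∑ i : Fin p, y i * x i) '' {x | N x ≤ 1}) =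
        ε * lqNorm p (q / (q - 1)) y + (1 - ε) * l1Norm p y ∧
    sSup ((fun x : Fin p → ℝ => ∑ i : Fin p, y i * x i) '' {x | N1 x ≤ 1}) =
        ε * linfNorm p y + (1 - ε) * l1Norm p y := by
  have hq0 : (0:ℝ) < q := lt_trans one_pos hq
  have hq0' : q ≠ 0 := hq0.ne'
  have hqs : q - 1 ≠ 0 := sub_ne_zero.2 hq.ne'
  set q' : ℝ := q / (q - 1) with hq'def
  have hconj : q'.HolderConjugate q := by
    simpa [Real.conjExponent, hq'def] using (Real.HolderConjugate.conjExponent hq).symm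
  have hq'0 : (0:ℝ) < q' := hconj.pos
  have hq'0' : q' ≠ 0 := hq'0.ne'
  have hl1nn : 0 ≤ l1Norm p y := Finset.sum_nonneg fun i _ => abs_nonneg _
  -- sign function
  set sg : Fin p → ℝ := fun i => if y i < 0 then (-1:ℝ) else 1 with hsgdef
  have hsgy : ∀ i, y i * sg i = |y i| := by
    intro i
    by_cases h : y i < 0
    · simp [hsgdef, h, abs_of_neg h]
    · simp [hsgdef, h, abs_of_nonneg (not_lt.1 h)]
  have hsg1 : ∀ i, |sg i| = 1 := by
    intro i; by_cases h : y i < 0 <;> simp [hsgdef, h]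
  -- generic construction of candidate maximizers
  have construct : ∀ u : Fin p → ℝ, (∀ i, 0 ≤ u i) →
      ∃ x : Fin p → ℝ, (∀ i, max (|x i| - (1 - ε)) 0 = ε * u i) ∧
        ∑ i : Fin p, y i * x i = (1 - ε) * l1Norm p y + ε * ∑ i : Fin p, |y i| * u i := by
    intro u hu
    refine ⟨fun i => sg i * ((1 - ε) + ε * u i), ?_, ?_⟩
    · intro i
      have habs : |sg i * ((1 - ε) + ε * u i)| = (1 - ε) + ε * u i := by
        rw [abs_mul, hsg1 i, one_mul,
          abs_of_nonneg (add_nonneg (by linarith) (mul_nonneg hε0.le (hu i)))]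
      rw [habs]
      have : (1 - ε) + ε * u i - (1 - ε) = ε * u i := by ring
      rw [this, max_eq_left (mul_nonneg hε0.le (hu i))]
    · have : ∀ i, y i * (sg i * ((1 - ε) + ε * u i)) =
          |y i| * (1 - ε) + ε * (|y i| * u i) := by
        intro i
        rw [show y i * (sg i * ((1 - ε) + ε * u i)) =
          (y i * sg i) * ((1 - ε) + ε * u i) by ring, hsgy i]
        ring
      rw [Finset.sum_congr rfl fun i _ => this i, Finset.sum_add_distrib,
        ← Finset.sum_mul, ← Finset.mul_sum, l1Norm]
      ring
  constructor
  · -- the q case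
    set S : ℝ := ∑ i : Fin p, |y i| ^ q' with hSdef
    have hSnn : 0 ≤ S := Finset.sum_nonneg fun i _ => Real.rpow_nonneg (abs_nonneg _) _
    have hlq : lqNorm p q' y = S ^ (1 / q') := by rw [lqNorm]
    have hlqnn : 0 ≤ lqNorm p q' y := by
      rw [hlq]; exact Real.rpow_nonneg hSnn _
    apply IsGreatest.csSup_eq
    constructor
    · -- membership: the supremum is attained
      rcases eq_or_lt_of_le hSnn with hS0 | hSpos
      · -- y = 0
        have hy0 : ∀ i, y i = 0 := by
          intro i
          have h1 : ∀ j ∈ Finset.univ, (0:ℝ) ≤ |y j| ^ q' :=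
            fun j _ => Real.rpow_nonneg (abs_nonneg _) _
          have := (Finset.sum_eq_zero_iff_of_nonneg h1).1 hS0.symm i (Finset.mem_univ i)
          have habs : |y i| = 0 := by
            by_contra hne
            exact hne (by
              have := Real.rpow_eq_zero_iff_of_nonneg (abs_nonneg (y i)) |>.1 this
              exact this.1)
          exact abs_eq_zero.1 habs
        obtain ⟨x, hxmax, hxval⟩ := construct (fun _ => 0) (fun _ => le_rfl)
        refine ⟨x, ?_, ?_⟩
        · show N x ≤ 1
          apply epsq_le_one_test hε0 hε1 hq0 hNeq
          have : ∀ i : Fin p, (max (|x i| - (1 - ε)) 0) ^ q = 0 := by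
            intro i
            rw [hxmax i, mul_zero, Real.zero_rpow hq0']
          rw [Finset.sum_congr rfl fun i _ => this i, Finset.sum_const_zero]
          exact Real.rpow_nonneg hε0.le _
        · have hl10 : l1Norm p y = 0 := by
            rw [l1Norm]
            exact Finset.sum_eq_zero fun i _ => by rw [hy0 i, abs_zero]
          have hlq0 : lqNorm p q' y = 0 := by
            rw [hlq, ← hS0, Real.zero_rpow (by positivity)]
          show ∑ i : Fin p, y i * x i = ε * lqNorm p q' y + (1 - ε) * l1Norm p y
          rw [hxval, hl10, hlq0]
          simp
      · -- y ≠ 0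
        set u : Fin p → ℝ := fun i => |y i| ^ (q' / q) / S ^ (1 / q) with hudef
        have hu : ∀ i, 0 ≤ u i := fun i =>
          div_nonneg (Real.rpow_nonneg (abs_nonneg _) _) (Real.rpow_nonneg hSnn _)
        have huq : ∀ i, u i ^ q = |y i| ^ q' / S := by
          intro i
          rw [hudef]
          rw [Real.div_rpow (Real.rpow_nonneg (abs_nonneg _) _) (Real.rpow_nonneg hSnn _),
            ← Real.rpow_mul (abs_nonneg _), ← Real.rpow_mul hSnn,
            div_mul_cancel₀ _ hq0', one_div, inv_mul_cancel₀ hq0', Real.rpow_one]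
        have husum : ∑ i : Fin p, u i ^ q = 1 := by
          rw [Finset.sum_congr rfl fun i _ => huq i, ← Finset.sum_div, ← hSdef,
            div_self hSpos.ne']
        have hyu : ∑ i : Fin p, |y i| * u i = S ^ (1 / q') := by
          have h1 : ∀ i : Fin p, |y i| * u i = |y i| ^ q' / S ^ (1 / q) := by
            intro i
            rw [hudef]
            rw [← mul_div_assoc]
            congr 1
            rw [← Real.rpow_one_add' (abs_nonneg _) (by
              intro h
              have : q' / q > 0 := div_pos hq'0 hq0
              linarith)]
            congr 1
            field_simp [hq'def]
            rw [hq'def]; field_simp; ring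
          rw [Finset.sum_congr rfl fun i _ => h1 i, ← Finset.sum_div, ← hSdef]
          have h12 : (1:ℝ)/q' = 1 - 1/q := by
            have := hconj.inv_add_inv_eq_one
            rw [one_div, one_div]
            linarith
          rw [h12, Real.rpow_sub hSpos, Real.rpow_one]
        obtain ⟨x, hxmax, hxval⟩ := construct u hu
        refine ⟨x, ?_, ?_⟩
        · show N x ≤ 1
          apply epsq_le_one_test hε0 hε1 hq0 hNeq
          have : ∀ i : Fin p, (max (|x i| - (1 - ε)) 0) ^ q = ε ^ q * u i ^ q := by
            intro i
            rw [hxmax i, Real.mul_rpow hε0.le (hu i)]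
          rw [Finset.sum_congr rfl fun i _ => this i, ← Finset.mul_sum, husum, mul_one]
        · show ∑ i : Fin p, y i * x i = ε * lqNorm p q' y + (1 - ε) * l1Norm p y
          rw [hxval, hyu, hlq]
          ring
    · -- upper bound
      rintro z ⟨x, hx, rfl⟩
      apply epsq_dual_ub hε0 hε1 (hN0 x) hx x y (lqNorm p q' y) hlqnn
      have hNxnn : 0 ≤ ε * N x := mul_nonneg hε0.le (hN0 x)
      calc ∑ i : Fin p, |y i| * max (|x i| - (1 - ε) * N x) 0
          ≤ (∑ i : Fin p, |y i| ^ q') ^ (1 / q') *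
            (∑ i : Fin p, (max (|x i| - (1 - ε) * N x) 0) ^ q) ^ (1 / q) :=
            Real.inner_le_Lp_mul_Lq_of_nonneg Finset.univ hconj
              (fun i _ => abs_nonneg _) (fun i _ => le_max_right _ _)
        _ = lqNorm p q' y * (ε * N x) := by
            rw [hNeq x, ← Real.rpow_mul hNxnn, mul_one_div_cancel hq0', Real.rpow_one,
              hlq]
  · -- the q = 1 case
    have hN1eq' : ∀ x : Fin p → ℝ,
        ∑ i : Fin p, max (|x i| - (1 - ε) * N1 x) 0 = ε * N1 x := by
      intro x
      have := hN1eq x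
      simpa [Real.rpow_one] using this
    have hlinfnn : 0 ≤ linfNorm p y := Real.iSup_nonneg fun i => abs_nonneg _
    have hle : ∀ i, |y i| ≤ linfNorm p y := by
      intro i
      rw [linfNorm]
      exact le_ciSup (Set.Finite.bddAbove (Set.finite_range fun i => |y i|)) i
    have htest : ∀ x : Fin p → ℝ,
        (∑ i : Fin p, max (|x i| - (1 - ε)) 0 ≤ ε) → N1 x ≤ 1 := by
      intro x hx
      apply epsq_le_one_test hε0 hε1 one_pos hN1eq x
      simpa [Real.rpow_one] using hx
    apply IsGreatest.csSup_eq
    constructor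
    · -- membership
      rcases Nat.eq_zero_or_pos p with hp0 | hppos
      · subst hp0
        refine ⟨fun i => 0, ?_, ?_⟩
        · show N1 _ ≤ 1
          apply htest
          simp [hε0.le]
        · show ∑ i : Fin 0, y i * 0 = ε * linfNorm 0 y + (1 - ε) * l1Norm 0 y
          have h0 : linfNorm 0 y = 0 := Real.iSup_of_isEmpty _
          simp [h0, l1Norm]
      · haveI : Nonempty (Fin p) := ⟨⟨0, hppos⟩⟩
        obtain ⟨i₀, hi₀⟩ := Finite.exists_max fun i => |y i|
        have hlinf : linfNorm p y = |y i₀| := by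
          rw [linfNorm]
          exact le_antisymm (ciSup_le fun i => hi₀ i)
            (le_ciSup (Set.Finite.bddAbove (Set.finite_range fun i => |y i|)) i₀)
        set u : Fin p → ℝ := fun i => if i = i₀ then (1:ℝ) else 0 with hudef
        have hu : ∀ i, 0 ≤ u i := by
          intro i; rw [hudef]; dsimp only; split <;> norm_num
        obtain ⟨x, hxmax, hxval⟩ := construct u hu
        refine ⟨x, ?_, ?_⟩
        · show N1 x ≤ 1
          apply htest
          have : ∀ i : Fin p, max (|x i| - (1 - ε)) 0 = ε * u i := hxmax
          rw [Finset.sum_congr rfl fun i _ => this i, ← Finset.mul_sum]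
          rw [hudef]
          simp
        · show ∑ i : Fin p, y i * x i = ε * linfNorm p y + (1 - ε) * l1Norm p y
          rw [hxval]
          have : ∑ i : Fin p, |y i| * u i = |y i₀| := by
            rw [hudef]
            simp [mul_ite]
          rw [this, hlinf]
          ring
    · -- upper bound
      rintro z ⟨x, hx, rfl⟩
      apply epsq_dual_ub hε0 hε1 (hN10 x) hx x y (linfNorm p y) hlinfnn
      calc ∑ i : Fin p, |y i| * max (|x i| - (1 - ε) * N1 x) 0
          ≤ ∑ i : Fin p, linfNorm p y * max (|x i| - (1 - ε) * N1 x) 0 := by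
            apply Finset.sum_le_sum
            intro i _
            exact mul_le_mul_of_nonneg_right (hle i) (le_max_right _ _)
        _ = linfNorm p y * (ε * N1 x) := by rw [← Finset.mul_sum, hN1eq' x]
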